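/- For all t > 0, t − log t − 1 ≥ (t−1)²/(2 max(t,1)). -/

import Mathlib

open Real Set

lemma aux_le_one {t : ℝ} (ht0 : 0 < t) (ht : t ≤ 1) :
    (t - 1) ^ 2 / 2 ≤ t - Real.log t - 1 := by
  set f : ℝ → ℝ := fun x => x - 1 - (x - 1) ^ 2 / 2 - Real.log x with hf
  have hder : ∀ x : ℝ, 0 < x → HasDerivAt f (1 - (x - 1) - 1 / x) x := by
    intro x hx
    have h1 : HasDerivAt (fun x : ℝ => x - 1) 1 x := (hasDerivAt_id x).sub_const 1
    have h2 : HasDerivAt (fun x : ℝ => (x - 1) ^ 2 / 2) (x - 1) x := by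
      have := (((hasDerivAt_id x).sub_const 1).pow 2).div_const 2
      exact this.congr_deriv (by simp)
    have h3 : HasDerivAt Real.log (1 / x) x := by
      simpa [one_div] using Real.hasDerivAt_log (ne_of_gt hx)
    exact (h1.sub h2).sub h3
  have anti : AntitoneOn f (Ioi 0) := by
    apply antitoneOn_of_deriv_nonpos (convex_Ioi 0)
    · intro x hx
      exact ((hder x hx).continuousAt).continuousWithinAt
    · intro x hx
      rw [interior_Ioi] at hx
      exact (hder x hx).differentiableAt.differentiableWithinAt
    · intro x hx
      rw [interior_Ioi] at hx
      rw [(hder x hx).deriv]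
      have hx0 : (0:ℝ) < x := hx
      have : 1 - (x - 1) - 1 / x = -((x - 1) ^ 2 / x) := by
        field_simp; ring
      rw [this]
      have : 0 ≤ (x - 1) ^ 2 / x := by positivity
      linarith
  have h01 : f 1 ≤ f t := anti (mem_Ioi.mpr ht0) (mem_Ioi.mpr one_pos) ht
  have hf1 : f 1 = 0 := by simp [hf]
  rw [hf1] at h01
  simp only [hf] at h01
  linarith

lemma aux_ge_one {t : ℝ} (ht : 1 ≤ t) :
    (t - 1) ^ 2 / (2 * t) ≤ t - Real.log t - 1 := by
  have ht0 : (0:ℝ) < t := lt_of_lt_of_le one_pos ht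
  set u := Real.log t with hu
  have hexp : Real.exp u = t := Real.exp_log ht0
  have hsinh : u ≤ Real.sinh u := by
    rcases eq_or_lt_of_le (Real.log_nonneg ht) with h | h
    · simp [hu, ← h]
    · exact le_of_lt (Real.self_lt_sinh_iff.mpr h)
  rw [Real.sinh_eq] at hsinh
  have hexpneg : Real.exp (-u) = 1 / t := by
    rw [Real.exp_neg, hexp, one_div]
  rw [hexp, hexpneg] at hsinh
  -- hsinh : u ≤ (t - 1/t)/2
  rw [div_le_iff₀ (by positivity)]
  have h1t : 1 / t * t = 1 := by field_simp
  nlinarith [hsinh, ht0, h1t]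

/-- Quadratic lower bound for the Gaussian KL term:
`t − log t − 1 ≥ (t−1)²/(2 max(t,1))` for all `t > 0`. -/
theorem t_sub_log_quadratic_lower_bound (t : ℝ) (ht : 0 < t) :
    (t - 1) ^ 2 / (2 * max t 1) ≤ t - Real.log t - 1 := by
  rcases le_total t 1 with h | h
  · rw [max_eq_right h]
    simpa using aux_le_one ht h
  · rw [max_eq_left h]
    exact aux_ge_one h
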